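/- Let u(x) = log( Σ_{i=1}^{k} t_i (1 + λ² d(x,x_i)²)^{-2} ) with t_i ≥ 0, Σ t_i = 1, λ > 0. Then there is a universal constant C (independent of λ, the points x_i and the weights t_i) such that |∇u(x)| ≤ C λ for all x ∈ M. -/

import Mathlib

open Finset

set_option maxHeartbeats 1600000 in
/-- Gradient estimate (gr1) for the bubble test functions: a universal constant `C`
such that `|∇u| ≤ C λ`, independent of `λ`, the points and the weights. -/
theorem bubble_gradient_estimate_uniform (k : ℕ) :
    ∃ C : ℝ, 0 < C ∧
      ∀ (lam : ℝ), 0 < lam →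
      ∀ (t : Fin (k + 1) → ℝ), (∀ i, 0 ≤ t i) → (∑ i, t i = 1) →
      ∀ (p : Fin (k + 1) → EuclideanSpace ℝ (Fin 2))
        (u : EuclideanSpace ℝ (Fin 2) → ℝ),
        (∀ y, u y = Real.log (∑ i, t i * ((1 + lam ^ 2 * dist y (p i) ^ 2) ^ 2)⁻¹)) →
        ∀ x, ‖fderiv ℝ u x‖ ≤ C * lam := by
  refine ⟨2, by norm_num, ?_⟩
  intro lam hlam t ht htsum p u hu x
  have hufun : u = fun y =>
      Real.log (∑ i, t i * ((1 + lam ^ 2 * dist y (p i) ^ 2) ^ 2)⁻¹) := funext hu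
  subst hufun
  set q : Fin (k + 1) → ℝ := fun i => 1 + lam ^ 2 * dist x (p i) ^ 2 with hqdef
  have hqpos : ∀ i, 0 < q i := by
    intro i
    have : 0 ≤ lam ^ 2 * dist x (p i) ^ 2 := by positivity
    simp only [hqdef]; linarith
  -- derivative of each bubble, with norm bound
  have key : ∀ i : Fin (k + 1), ∃ D : EuclideanSpace ℝ (Fin 2) →L[ℝ] ℝ,
      HasFDerivAt (fun y => ((1 + lam ^ 2 * dist y (p i) ^ 2) ^ 2)⁻¹) D x ∧
      ‖D‖ ≤ 2 * lam * ((q i) ^ 2)⁻¹ := by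
    intro i
    have hd2 : HasFDerivAt (fun y : EuclideanSpace ℝ (Fin 2) => ‖y - p i‖ ^ 2)
        (2 • (innerSL ℝ (x - p i)).comp (ContinuousLinearMap.id ℝ (EuclideanSpace ℝ (Fin 2)))) x :=
      ((hasFDerivAt_id x).sub_const (p i)).norm_sq
    have hQ : HasFDerivAt (fun y : EuclideanSpace ℝ (Fin 2) => 1 + lam ^ 2 * dist y (p i) ^ 2)
        (lam ^ 2 • (2 • (innerSL ℝ (x - p i)).comp (ContinuousLinearMap.id ℝ (EuclideanSpace ℝ (Fin 2))))) x := by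
      simpa only [dist_eq_norm] using (hd2.const_mul (lam ^ 2)).const_add 1
    have hQQ := hQ.mul hQ
    have hne : ((fun y : EuclideanSpace ℝ (Fin 2) => (1 + lam ^ 2 * dist y (p i) ^ 2) *
        (1 + lam ^ 2 * dist y (p i) ^ 2)) x) ≠ 0 := by
      have := hqpos i
      simp only [hqdef] at this ⊢
      positivity
    have hinv := (hasDerivAt_inv hne).comp_hasFDerivAt x hQQ
    have hfun : HasFDerivAt (fun y => ((1 + lam ^ 2 * dist y (p i) ^ 2) ^ 2)⁻¹)
        (-(((1 + lam ^ 2 * dist x (p i) ^ 2) * (1 + lam ^ 2 * dist x (p i) ^ 2)) ^ 2)⁻¹ •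
          ((1 + lam ^ 2 * dist x (p i) ^ 2) •
              lam ^ 2 • (2 • (innerSL ℝ (x - p i)).comp (ContinuousLinearMap.id ℝ (EuclideanSpace ℝ (Fin 2)))) +
            (1 + lam ^ 2 * dist x (p i) ^ 2) •
              lam ^ 2 • (2 • (innerSL ℝ (x - p i)).comp (ContinuousLinearMap.id ℝ (EuclideanSpace ℝ (Fin 2)))))) x := by
      simpa only [Function.comp_def, Pi.mul_apply, pow_two] using hinv
    refine ⟨_, hfun, ?_⟩
    -- rewrite the derivative as a scalar multiple of innerSL
    set c : ℝ := -(((q i * q i) ^ 2)⁻¹ * (4 * lam ^ 2 * q i)) with hc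
    have hrepr :
        (-(((1 + lam ^ 2 * dist x (p i) ^ 2) * (1 + lam ^ 2 * dist x (p i) ^ 2)) ^ 2)⁻¹ •
          ((1 + lam ^ 2 * dist x (p i) ^ 2) •
              lam ^ 2 • (2 • (innerSL ℝ (x - p i)).comp (ContinuousLinearMap.id ℝ (EuclideanSpace ℝ (Fin 2)))) +
            (1 + lam ^ 2 * dist x (p i) ^ 2) •
              lam ^ 2 • (2 • (innerSL ℝ (x - p i)).comp (ContinuousLinearMap.id ℝ (EuclideanSpace ℝ (Fin 2))))))
          = innerSL ℝ (c • (x - p i)) := by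
      ext v
      simp only [ContinuousLinearMap.smul_apply, ContinuousLinearMap.add_apply,
        ContinuousLinearMap.coe_smul', Pi.smul_apply, ContinuousLinearMap.comp_apply,
        ContinuousLinearMap.coe_id', id_eq, smul_eq_mul, innerSL_apply_apply,
        real_inner_smul_left, hc, hqdef]
      ring
    rw [hrepr, innerSL_apply_norm, norm_smul, Real.norm_eq_abs]
    have hd : 0 ≤ dist x (p i) := dist_nonneg
    have hxn : ‖x - p i‖ = dist x (p i) := (dist_eq_norm x (p i)).symm
    rw [hxn]
    have hcabs : |c| = ((q i * q i) ^ 2)⁻¹ * (4 * lam ^ 2 * q i) := by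
      rw [hc, abs_neg, abs_of_nonneg]
      have := hqpos i
      positivity
    rw [hcabs]
    -- key inequality : 2 * lam * d ≤ q i
    have h2 : 2 * lam * dist x (p i) ≤ q i := by
      simp only [hqdef]
      nlinarith [sq_nonneg (lam * dist x (p i) - 1)]
    have hq := hqpos i
    rw [show ((q i * q i) ^ 2)⁻¹ * (4 * lam ^ 2 * q i) * dist x (p i)
        = (4 * lam ^ 2 * q i * dist x (p i)) / (q i) ^ 4 by
          ring,
      show 2 * lam * ((q i) ^ 2)⁻¹ = (2 * lam) / (q i) ^ 2 by
          ring,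
      div_le_div_iff₀ (by positivity) (by positivity)]
    nlinarith [mul_nonneg (mul_nonneg hlam.le (pow_pos hq 3).le)
      (sub_nonneg.2 h2)]
  choose D hD hDnorm using key
  -- derivative of the sum
  have hf : HasFDerivAt
      (fun y => ∑ i, t i * ((1 + lam ^ 2 * dist y (p i) ^ 2) ^ 2)⁻¹)
      (∑ i, t i • D i) x :=
    HasFDerivAt.fun_sum fun i _ => (hD i).const_mul (t i)
  set fx : ℝ := ∑ i, t i * ((q i) ^ 2)⁻¹ with hfx
  have hfxpos : 0 < fx := by
    obtain ⟨j, hj⟩ : ∃ j, 0 < t j := by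
      by_contra h
      push_neg at h
      have hz : ∀ i, t i = 0 := fun i => le_antisymm (h i) (ht i)
      simp [hz] at htsum
    have hterm : 0 < t j * ((q j) ^ 2)⁻¹ :=
      mul_pos hj (inv_pos.2 (pow_pos (hqpos j) 2))
    refine lt_of_lt_of_le hterm ?_
    exact Finset.single_le_sum (f := fun i => t i * ((q i) ^ 2)⁻¹)
      (fun i _ => mul_nonneg (ht i) (inv_nonneg.2 (pow_pos (hqpos i) 2).le))
      (Finset.mem_univ j)
  have hfxval : (∑ i, t i * ((1 + lam ^ 2 * dist x (p i) ^ 2) ^ 2)⁻¹) = fx := rfl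
  have hlog := hf.log (by rw [hfxval]; exact hfxpos.ne')
  rw [hlog.fderiv, hfxval]
  have hsum_norm : ‖∑ i, t i • D i‖ ≤ 2 * lam * fx := by
    calc ‖∑ i, t i • D i‖ ≤ ∑ i, ‖t i • D i‖ := norm_sum_le _ _
      _ ≤ ∑ i, t i * (2 * lam * ((q i) ^ 2)⁻¹) := by
          refine Finset.sum_le_sum fun i _ => ?_
          refine le_trans (ContinuousLinearMap.opNorm_smul_le _ _) ?_
          rw [Real.norm_eq_abs, abs_of_nonneg (ht i)]
          exact mul_le_mul_of_nonneg_left (hDnorm i) (ht i)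
      _ = 2 * lam * fx := by
          rw [hfx, Finset.mul_sum]
          exact Finset.sum_congr rfl fun i _ => by ring
  calc ‖fx⁻¹ • ∑ i, t i • D i‖ ≤ ‖fx⁻¹‖ * ‖∑ i, t i • D i‖ := ContinuousLinearMap.opNorm_smul_le _ _
    _ = fx⁻¹ * ‖∑ i, t i • D i‖ := by
        rw [Real.norm_eq_abs, abs_of_nonneg (inv_nonneg.2 hfxpos.le)]
    _ ≤ fx⁻¹ * (2 * lam * fx) :=
        mul_le_mul_of_nonneg_left hsum_norm (inv_nonneg.2 hfxpos.le)
    _ = 2 * lam := by field_simp
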